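/- Let (F,v) and (G,w) be c-Bessel mappings for H with Bessel bounds B_{F,v} and B_{G,w} and synthesis operators T_{F,v}, T_{G,w}. If there is a bounded operator Q: L²(X,F) → L²(X,G) with T_{G,w} Q T*_{F,v} = I_H, then (F,v) is a c-fusion frame with lower bound B_{G,w}^{-1}‖Q‖^{-2} and (G,w) is a c-fusion frame with lower bound B_{F,v}^{-1}‖Q‖^{-2}. -/

import Mathlib

open MeasureTheory
open scoped ENNReal InnerProductSpace

noncomputable section

variable {H : Type} [NormedAddCommGroup H] [InnerProductSpace ℂ H] [CompleteSpace H]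
variable {X : Type} [MeasurableSpace X]

open scoped Classical in
def projFn (W : Submodule ℂ H) (h : H) : H :=
  if hW : IsClosed (W : Set H) then
    haveI : CompleteSpace W := hW.completeSpace_coe
    (W.orthogonalProjectionOnto h : H)
  else 0

structure IsCBessel (μ : Measure X) (F : X → Submodule ℂ H) (v : X → ℝ) (B : ℝ) : Prop where
  closed : ∀ x, IsClosed ((F x) : Set H)
  meas : ∀ h : H, AEStronglyMeasurable (fun x => projFn (F x) h) μ
  bessel : ∀ h : H,
    ∫⁻ x, ENNReal.ofReal ((v x) ^ 2 * ‖projFn (F x) h‖ ^ 2) ∂μ ≤ ENNReal.ofReal (B * ‖h‖ ^ 2)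

structure IsCFusionFrame (μ : Measure X) (F : X → Submodule ℂ H) (v : X → ℝ)
    (A B : ℝ) extends IsCBessel μ F v B : Prop where
  posA : 0 < A
  lower : ∀ h : H,
    ENNReal.ofReal (A * ‖h‖ ^ 2) ≤ ∫⁻ x, ENNReal.ofReal ((v x) ^ 2 * ‖projFn (F x) h‖ ^ 2) ∂μ

def L2F (μ : Measure X) (F : X → Submodule ℂ H) : Submodule ℂ (Lp H 2 μ) where
  carrier := {f | ∀ᵐ x ∂μ, f x ∈ F x}
  add_mem' := by
    intro f g hf hg
    filter_upwards [hf, hg, Lp.coeFn_add f g] with x h1 h2 h3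
    rw [h3]
    exact add_mem h1 h2
  zero_mem' := by
    filter_upwards [Lp.coeFn_zero H 2 μ] with x h1
    rw [h1]; exact zero_mem _
  smul_mem' := by
    intro c f hf
    filter_upwards [hf, Lp.coeFn_smul c f] with x h1 h2
    rw [h2]
    exact Submodule.smul_mem _ _ h1

def IsSynthesis (μ : Measure X) (F : X → Submodule ℂ H) (v : X → ℝ)
    (T : L2F μ F →L[ℂ] H) : Prop :=
  ∀ (f : L2F μ F) (h : H),
    (⟪T f, h⟫_ℂ : ℂ) = ∫ x, (v x : ℂ) * (⟪(↑f : Lp H 2 μ) x, h⟫_ℂ : ℂ) ∂μ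


theorem lint_norm_sq (μ : Measure X) (f : Lp H 2 μ) :
    ∫⁻ x, ENNReal.ofReal (‖f x‖ ^ 2) ∂μ = ENNReal.ofReal (‖f‖ ^ 2) := by
  have h1 : ‖f‖ = (eLpNorm f 2 μ).toReal := Lp.norm_def f
  have h2 : eLpNorm (f : X → H) 2 μ = (∫⁻ x, (‖f x‖₊ : ℝ≥0∞) ^ (2:ℝ) ∂μ) ^ (1/(2:ℝ)) := by
    rw [eLpNorm_eq_lintegral_rpow_enorm_toReal (by norm_num) (by norm_num)]
    norm_num [enorm_eq_nnnorm]
  have hne : eLpNorm (f : X → H) 2 μ ≠ ⊤ := Lp.eLpNorm_ne_top f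
  have h3 : ∀ x, ENNReal.ofReal (‖f x‖ ^ 2) = (‖f x‖₊ : ℝ≥0∞) ^ (2:ℝ) := by
    intro x
    rw [ENNReal.ofReal_pow (norm_nonneg _), ofReal_norm,
      ← ENNReal.rpow_natCast]
    norm_num [enorm_eq_nnnorm]
  simp_rw [h3]
  rw [h1, ENNReal.ofReal_pow ENNReal.toReal_nonneg,
    ENNReal.ofReal_toReal hne, h2, ← ENNReal.rpow_natCast _ 2, ← ENNReal.rpow_mul]
  norm_num

theorem key {μ : Measure X} {F : X → Submodule ℂ H} {v : X → ℝ} {B : ℝ}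
    (hF : IsCBessel μ F v B) {T : L2F μ F →L[ℂ] H} (hT : IsSynthesis μ F v T)
    (f : L2F μ F) (h : H) {t : ℝ} (ht : 0 < t) :
    ‖(⟪T f, h⟫_ℂ : ℂ)‖ ≤ t / 2 * ‖(f : Lp H 2 μ)‖ ^ 2 +
      (∫⁻ x, ENNReal.ofReal ((v x) ^ 2 * ‖projFn (F x) h‖ ^ 2) ∂μ).toReal / (2 * t) := by
  set S := ∫⁻ x, ENNReal.ofReal ((v x) ^ 2 * ‖projFn (F x) h‖ ^ 2) ∂μ with hSdef
  have hSne : S ≠ ⊤ := ne_top_of_le_ne_top ENNReal.ofReal_ne_top (hF.bessel h)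
  rw [hT f h]
  refine le_trans (norm_integral_le_lintegral_norm _) ?_
  have hmem : ∀ᵐ x ∂μ, (↑f : Lp H 2 μ) x ∈ F x := f.2
  have hbound : ∀ᵐ x ∂μ, ENNReal.ofReal ‖(v x : ℂ) * ⟪(↑f : Lp H 2 μ) x, h⟫_ℂ‖ ≤
      ENNReal.ofReal (t / 2 * ‖(↑f : Lp H 2 μ) x‖ ^ 2) +
      ENNReal.ofReal (1 / (2 * t) * ((v x) ^ 2 * ‖projFn (F x) h‖ ^ 2)) := by
    filter_upwards [hmem] with x hx
    have hcl := hF.closed x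
    haveI : CompleteSpace (F x) := hcl.completeSpace_coe
    have hproj : projFn (F x) h = ((F x).orthogonalProjectionOnto h : H) := by
      simp [projFn, hcl]
    have hinner : ⟪(↑f : Lp H 2 μ) x, h⟫_ℂ = ⟪(↑f : Lp H 2 μ) x, projFn (F x) h⟫_ℂ := by
      rw [hproj]
      have h0 : ⟪h - ((F x).orthogonalProjectionOnto h : H), (↑f : Lp H 2 μ) x⟫_ℂ = 0 :=
        Submodule.starProjection_inner_eq_zero h _ hx
      have h1 := congrArg (starRingEnd ℂ) h0
      rw [inner_conj_symm, inner_sub_right, map_zero, sub_eq_zero] at h1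
      exact h1
    rw [← ENNReal.ofReal_add (by positivity) (by positivity)]
    apply ENNReal.ofReal_le_ofReal
    rw [norm_mul, Complex.norm_real, Real.norm_eq_abs, hinner]
    have hcs : ‖⟪(↑f : Lp H 2 μ) x, projFn (F x) h⟫_ℂ‖ ≤
        ‖(↑f : Lp H 2 μ) x‖ * ‖projFn (F x) h‖ := norm_inner_le_norm _ _
    have h2 := sq_nonneg (t * ‖(↑f : Lp H 2 μ) x‖ - |v x| * ‖projFn (F x) h‖)
    have h3 : |v x| ^ 2 = (v x) ^ 2 := sq_abs _
    have h2t : (0:ℝ) < 2 * t := by linarith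
    rw [show (1:ℝ)/(2*t) * ((v x) ^ 2 * ‖projFn (F x) h‖ ^ 2)
        = ((v x) ^ 2 * ‖projFn (F x) h‖ ^ 2)/(2*t) from by ring,
      ← sub_le_iff_le_add', le_div_iff₀ h2t]
    have h5 : 2*t*|v x| * ‖⟪(↑f : Lp H 2 μ) x, projFn (F x) h⟫_ℂ‖ ≤
        2*t*|v x| * (‖(↑f : Lp H 2 μ) x‖ * ‖projFn (F x) h‖) :=
      mul_le_mul_of_nonneg_left hcs (by positivity)
    nlinarith [h2, h3, h5]
  have hmeas : AEMeasurable (fun x => ENNReal.ofReal (t / 2 * ‖(↑f : Lp H 2 μ) x‖ ^ 2)) μ := by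
    have := (Lp.aestronglyMeasurable (↑f : Lp H 2 μ)).norm.aemeasurable
    exact (((this.pow_const 2).const_mul (t / 2)).ennreal_ofReal)
  have step2 : (∫⁻ x, ENNReal.ofReal ‖(v x : ℂ) * ⟪(↑f : Lp H 2 μ) x, h⟫_ℂ‖ ∂μ) ≤
      ENNReal.ofReal (t / 2 * ‖(f : Lp H 2 μ)‖ ^ 2) + ENNReal.ofReal (1 / (2 * t)) * S := by
    calc ∫⁻ x, ENNReal.ofReal ‖(v x : ℂ) * ⟪(↑f : Lp H 2 μ) x, h⟫_ℂ‖ ∂μ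
        ≤ ∫⁻ x, (ENNReal.ofReal (t / 2 * ‖(↑f : Lp H 2 μ) x‖ ^ 2) +
            ENNReal.ofReal (1 / (2 * t) * ((v x) ^ 2 * ‖projFn (F x) h‖ ^ 2))) ∂μ :=
          lintegral_mono_ae hbound
      _ = (∫⁻ x, ENNReal.ofReal (t / 2 * ‖(↑f : Lp H 2 μ) x‖ ^ 2) ∂μ) +
          ∫⁻ x, ENNReal.ofReal (1 / (2 * t) * ((v x) ^ 2 * ‖projFn (F x) h‖ ^ 2)) ∂μ :=
          lintegral_add_left' hmeas _
      _ = ENNReal.ofReal (t / 2 * ‖(f : Lp H 2 μ)‖ ^ 2) + ENNReal.ofReal (1 / (2 * t)) * S := by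
          congr 1
          · simp_rw [ENNReal.ofReal_mul (by positivity : (0:ℝ) ≤ t / 2)]
            rw [lintegral_const_mul' _ _ ENNReal.ofReal_ne_top, lint_norm_sq,
              ← ENNReal.ofReal_mul (by positivity : (0:ℝ) ≤ t / 2)]
          · simp_rw [ENNReal.ofReal_mul (by positivity : (0:ℝ) ≤ 1 / (2 * t))]
            rw [lintegral_const_mul' _ _ ENNReal.ofReal_ne_top]
  refine le_trans (ENNReal.toReal_mono ?_ step2) ?_
  · exact ENNReal.add_ne_top.2 ⟨ENNReal.ofReal_ne_top, ENNReal.mul_ne_top ENNReal.ofReal_ne_top hSne⟩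
  rw [ENNReal.toReal_add ENNReal.ofReal_ne_top (ENNReal.mul_ne_top ENNReal.ofReal_ne_top hSne),
    ENNReal.toReal_mul, ENNReal.toReal_ofReal (by positivity), ENNReal.toReal_ofReal (by positivity)]
  rw [div_eq_mul_inv (S.toReal), mul_comm (S.toReal), one_div]

set_option maxHeartbeats 2000000 in
set_option synthInstance.maxHeartbeats 1000000 in
/-- If `(F, v)` and `(G, w)` are c-Bessel with bounds `B_F, B_G` and there
is a bounded `Q` with `T_{G,w} Q T*_{F,v} = I_H`, then `(F, v)` is a c-fusion frame with
lower bound `B_G⁻¹ ‖Q‖⁻²` and `(G, w)` is one with lower bound `B_F⁻¹ ‖Q‖⁻²`. -/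
theorem statement5 {μ : Measure X} {F G : X → Submodule ℂ H} {v w : X → ℝ} {BF BG : ℝ}
    (hF : IsCBessel μ F v BF) (hG : IsCBessel μ G w BG) [CompleteSpace ↥(L2F μ F)]
    (TF : L2F μ F →L[ℂ] H) (hTF : IsSynthesis μ F v TF)
    (TG : L2F μ G →L[ℂ] H) (hTG : IsSynthesis μ G w TG)
    (Q : (L2F μ F : Type) →L[ℂ] (L2F μ G : Type))
    (hQ : TG.comp (Q.comp (ContinuousLinearMap.adjoint TF)) = ContinuousLinearMap.id ℂ H) :
    (∀ h : H, ENNReal.ofReal ((BG⁻¹ * (‖Q‖ ^ 2)⁻¹) * ‖h‖ ^ 2) ≤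
        ∫⁻ x, ENNReal.ofReal ((v x) ^ 2 * ‖projFn (F x) h‖ ^ 2) ∂μ) ∧
    (∀ h : H, ENNReal.ofReal ((BF⁻¹ * (‖Q‖ ^ 2)⁻¹) * ‖h‖ ^ 2) ≤
        ∫⁻ x, ENNReal.ofReal ((w x) ^ 2 * ‖projFn (G x) h‖ ^ 2) ∂μ) := by
  letI i1 : NormedAddCommGroup ↥(L2F μ F) := inferInstance
  letI i2 : InnerProductSpace ℂ ↥(L2F μ F) := inferInstance
  letI i3 : NormedAddCommGroup ↥(L2F μ G) := inferInstance
  letI i4 : InnerProductSpace ℂ ↥(L2F μ G) := inferInstance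
  set TFa := ContinuousLinearMap.adjoint TF with hTFa
  have core : ∀ h : H, h ≠ 0 →
      ((BG⁻¹ * (‖Q‖ ^ 2)⁻¹) * ‖h‖ ^ 2 ≤
        (∫⁻ x, ENNReal.ofReal ((v x) ^ 2 * ‖projFn (F x) h‖ ^ 2) ∂μ).toReal ∧
       (BF⁻¹ * (‖Q‖ ^ 2)⁻¹) * ‖h‖ ^ 2 ≤
        (∫⁻ x, ENNReal.ofReal ((w x) ^ 2 * ‖projFn (G x) h‖ ^ 2) ∂μ).toReal) := by
    intro h hh
    set sF := (∫⁻ x, ENNReal.ofReal ((v x) ^ 2 * ‖projFn (F x) h‖ ^ 2) ∂μ).toReal with hsF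
    set sG := (∫⁻ x, ENNReal.ofReal ((w x) ^ 2 * ‖projFn (G x) h‖ ^ 2) ∂μ).toReal with hsG
    have hid : TG (Q (TFa h)) = h := by
      have := ContinuousLinearMap.ext_iff.1 hQ h
      simpa using this
    -- a² ≤ sF
    have ha : ‖TFa h‖ ^ 2 ≤ sF := by
      have hk := key hF hTF (TFa h) h one_pos
      have he : ⟪TF (TFa h), h⟫_ℂ = ⟪TFa h, TFa h⟫_ℂ :=
        (ContinuousLinearMap.adjoint_inner_right TF (TFa h) h).symm
      rw [he] at hk
      have hn : ‖⟪TFa h, TFa h⟫_ℂ‖ = ‖TFa h‖ ^ 2 := by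
        rw [inner_self_eq_norm_sq_to_K]
        simp [Complex.norm_real]
      rw [hn] at hk
      have hnc : ‖((TFa h : L2F μ F) : Lp H 2 μ)‖ = ‖TFa h‖ := rfl
      rw [hnc] at hk
      linarith
    -- norm bound
    have hQle : ‖Q (TFa h)‖ ≤ ‖Q‖ * ‖TFa h‖ := Q.le_opNorm _
    have hQn : (0:ℝ) ≤ ‖Q‖ := ContinuousLinearMap.opNorm_nonneg Q
    have hTFn : (0:ℝ) ≤ ‖TFa h‖ := norm_nonneg _
    -- main inequality, parameterized
    have hmain : ∀ t : ℝ, 0 < t → ‖h‖ ^ 2 ≤ t / 2 * (‖Q‖ * ‖TFa h‖) ^ 2 + sG / (2 * t) := by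
      intro t ht
      have hk := key hG hTG (Q (TFa h)) h ht
      rw [hid] at hk
      have hn : ‖⟪h, h⟫_ℂ‖ = ‖h‖ ^ 2 := by
        rw [inner_self_eq_norm_sq_to_K]
        simp [Complex.norm_real]
      rw [hn] at hk
      have hnc : ‖((Q (TFa h) : L2F μ G) : Lp H 2 μ)‖ = ‖Q (TFa h)‖ := rfl
      rw [hnc] at hk
      have : t / 2 * ‖Q (TFa h)‖ ^ 2 ≤ t / 2 * (‖Q‖ * ‖TFa h‖) ^ 2 := by
        have := mul_le_mul_of_nonneg_left
          (mul_self_le_mul_self (norm_nonneg _) hQle) (by positivity : (0:ℝ) ≤ t / 2)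
        nlinarith
      linarith
    -- positivity of norms and bounds
    have hh2 : (0:ℝ) < ‖h‖ ^ 2 := pow_pos (norm_pos_iff.2 hh) 2
    have hTFa0 : TFa h ≠ 0 := by
      intro h0
      apply hh
      rw [← hid, h0, map_zero, map_zero]
    have hTFpos : (0:ℝ) < ‖TFa h‖ := norm_pos_iff.2 hTFa0
    have hQpos : (0:ℝ) < ‖Q‖ := by
      rcases lt_or_eq_of_le hQn with h1 | h1
      · exact h1
      · exfalso
        apply hh
        rw [← hid]
        have : Q (TFa h) = 0 := by
          have := Q.le_opNorm (TFa h)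
          rw [← h1] at this
          simp only [zero_mul] at this
          exact norm_le_zero_iff.1 this
        rw [this, map_zero]
    have hsFnonneg : (0:ℝ) ≤ sF := ENNReal.toReal_nonneg
    have hsGnonneg : (0:ℝ) ≤ sG := ENNReal.toReal_nonneg
    have hBFpos : (0:ℝ) < BF := by
      by_contra hBF
      push_neg at hBF
      have : (∫⁻ x, ENNReal.ofReal ((v x) ^ 2 * ‖projFn (F x) h‖ ^ 2) ∂μ) = 0 := by
        refine le_antisymm (le_trans (hF.bessel h) ?_) zero_le
        rw [ENNReal.ofReal_eq_zero.2 (mul_nonpos_of_nonpos_of_nonneg hBF (by positivity))]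
      have hsF0 : sF = 0 := by rw [hsF, this, ENNReal.toReal_zero]
      rw [hsF0] at ha
      nlinarith
    have hBGpos : (0:ℝ) < BG := by
      by_contra hBG
      push_neg at hBG
      have : (∫⁻ x, ENNReal.ofReal ((w x) ^ 2 * ‖projFn (G x) h‖ ^ 2) ∂μ) = 0 := by
        refine le_antisymm (le_trans (hG.bessel h) ?_) zero_le
        rw [ENNReal.ofReal_eq_zero.2 (mul_nonpos_of_nonpos_of_nonneg hBG (by positivity))]
      have hsG0 : sG = 0 := by rw [hsG, this, ENNReal.toReal_zero]
      set K := (‖Q‖ * ‖TFa h‖) ^ 2 with hK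
      have hKpos : (0:ℝ) < K := by positivity
      have := hmain (‖h‖ ^ 2 / K) (by positivity)
      rw [hsG0] at this
      have he : ‖h‖ ^ 2 / K / 2 * K = ‖h‖ ^ 2 / 2 := by
        field_simp
      simp only [zero_div, add_zero] at this
      rw [he] at this
      linarith
    have hsFle : sF ≤ BF * ‖h‖ ^ 2 := by
      rw [hsF]
      calc (∫⁻ x, ENNReal.ofReal ((v x) ^ 2 * ‖projFn (F x) h‖ ^ 2) ∂μ).toReal
          ≤ (ENNReal.ofReal (BF * ‖h‖ ^ 2)).toReal :=
            ENNReal.toReal_mono ENNReal.ofReal_ne_top (hF.bessel h)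
        _ = BF * ‖h‖ ^ 2 := ENNReal.toReal_ofReal (by positivity)
    have hsGle : sG ≤ BG * ‖h‖ ^ 2 := by
      rw [hsG]
      calc (∫⁻ x, ENNReal.ofReal ((w x) ^ 2 * ‖projFn (G x) h‖ ^ 2) ∂μ).toReal
          ≤ (ENNReal.ofReal (BG * ‖h‖ ^ 2)).toReal :=
            ENNReal.toReal_mono ENNReal.ofReal_ne_top (hG.bessel h)
        _ = BG * ‖h‖ ^ 2 := ENNReal.toReal_ofReal (by positivity)
    constructor
    · -- lower bound for sF : use t := BG
      have h1 := hmain BG hBGpos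
      have h2 : BG / 2 * (‖Q‖ * ‖TFa h‖) ^ 2 ≤ BG / 2 * (‖Q‖ ^ 2 * sF) := by
        have : (‖Q‖ * ‖TFa h‖) ^ 2 = ‖Q‖ ^ 2 * ‖TFa h‖ ^ 2 := by ring
        rw [this]
        have := mul_le_mul_of_nonneg_left ha (by positivity : (0:ℝ) ≤ ‖Q‖ ^ 2)
        nlinarith
      have h3 : sG / (2 * BG) ≤ ‖h‖ ^ 2 / 2 := by
        rw [div_le_div_iff₀ (by positivity) (by norm_num)]
        nlinarith
      have h4 : ‖h‖ ^ 2 ≤ BG * ‖Q‖ ^ 2 * sF := by nlinarith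
      rw [show BG⁻¹ * (‖Q‖ ^ 2)⁻¹ * ‖h‖ ^ 2 = ‖h‖ ^ 2 / (BG * ‖Q‖ ^ 2) from by
        field_simp <;> ring, div_le_iff₀ (by positivity)]
      nlinarith
    · -- lower bound for sG : use t := (‖Q‖ ^ 2 * BF)⁻¹
      set c := ‖Q‖ ^ 2 * BF with hc
      have hcpos : (0:ℝ) < c := by positivity
      have h1 := hmain c⁻¹ (by positivity)
      have h2 : c⁻¹ / 2 * (‖Q‖ * ‖TFa h‖) ^ 2 ≤ ‖h‖ ^ 2 / 2 := by
        have hb : (‖Q‖ * ‖TFa h‖) ^ 2 ≤ c * ‖h‖ ^ 2 := by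
          have : (‖Q‖ * ‖TFa h‖) ^ 2 = ‖Q‖ ^ 2 * ‖TFa h‖ ^ 2 := by ring
          rw [this, hc]
          nlinarith
        calc c⁻¹ / 2 * (‖Q‖ * ‖TFa h‖) ^ 2 ≤ c⁻¹ / 2 * (c * ‖h‖ ^ 2) :=
              mul_le_mul_of_nonneg_left hb (by positivity)
          _ = ‖h‖ ^ 2 / 2 := by field_simp <;> ring
      have h3 : sG / (2 * c⁻¹) = sG * c / 2 := by field_simp <;> ring
      have h4 : ‖h‖ ^ 2 ≤ sG * c := by
        rw [h3] at h1
        linarith [h2, h1]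
      rw [show BF⁻¹ * (‖Q‖ ^ 2)⁻¹ * ‖h‖ ^ 2 = ‖h‖ ^ 2 / c from by
        rw [hc]; ring, div_le_iff₀ hcpos]
      linarith
  constructor
  · intro h
    by_cases hh : h = 0
    · simp [hh]
    · have hne : (∫⁻ x, ENNReal.ofReal ((v x) ^ 2 * ‖projFn (F x) h‖ ^ 2) ∂μ) ≠ ⊤ :=
        ne_top_of_le_ne_top ENNReal.ofReal_ne_top (hF.bessel h)
      rw [← ENNReal.ofReal_toReal hne]
      exact ENNReal.ofReal_le_ofReal (core h hh).1
  · intro h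
    by_cases hh : h = 0
    · simp [hh]
    · have hne : (∫⁻ x, ENNReal.ofReal ((w x) ^ 2 * ‖projFn (G x) h‖ ^ 2) ∂μ) ≠ ⊤ :=
        ne_top_of_le_ne_top ENNReal.ofReal_ne_top (hG.bessel h)
      rw [← ENNReal.ofReal_toReal hne]
      exact ENNReal.ofReal_le_ofReal (core h hh).2
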